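/- Fix m, n ≥ 2. Let A₁ ≠ A₂ be nonempty subsets of [m] and B₁ ≠ B₂ nonempty subsets of N with #A₁ ≡ #A₂ ≡ #B₁ ≡ #B₂ (mod 2), and let a ∈ ℝ^(D̄_{m,n}) be the associated four-parity functional. Then for every T ⊆ [m+n] with T ∉ {A₁ ∪ B₁, A₁ ∪ B₂, A₂ ∪ B₁, A₂ ∪ B₂}, one has Σ_{S ∈ D̄_{m,n}} a_S · d^T_S = 0; equivalently, among the S ∈ D̄_{m,n} with #(S ∩ T) odd, the number with a_S = 1 equals the number with a_S = −1. -/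

import Mathlib

open Finset

/-- Membership in `D̄_{m,n}`. -/
def DFace (m n : ℕ) (S : Finset (Fin (m + n))) : Prop :=
  S.Nonempty ∧ (∃ i : Fin (m + n), i.val < m ∧ i ∉ S) ∧
    (∃ j : Fin (m + n), m ≤ j.val ∧ j ∉ S)

instance (m n : ℕ) : DecidablePred (DFace m n) := fun S => by
  unfold DFace; infer_instance

/-- The index type of the nonempty faces of `D_{m,n}`. -/
abbrev DIdx (m n : ℕ) : Type := {S : Finset (Fin (m + n)) // DFace m n S}

/-- The vertex `d^T` of `GCut(D_{m,n})`. -/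
noncomputable def dvecD (m n : ℕ) (T : Finset (Fin (m + n))) : DIdx m n → ℝ :=
  fun S => if Odd ((S.val ∩ T).card) then 1 else 0

/-- The four-parity functional `a` associated to `A₁, A₂, B₁, B₂`. -/
noncomputable def fourParity (m n : ℕ) (A₁ A₂ B₁ B₂ : Finset (Fin (m + n)))
    (S : Finset (Fin (m + n))) : ℝ :=
  if (Odd ((S ∩ A₁).card) ∧ Even ((S ∩ B₁).card) ∧ Even ((S ∩ A₂).card) ∧
        Odd ((S ∩ B₂).card)) ∨
      (Even ((S ∩ A₁).card) ∧ Odd ((S ∩ B₁).card) ∧ Odd ((S ∩ A₂).card) ∧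
        Even ((S ∩ B₂).card)) then 1
  else if (Odd ((S ∩ A₁).card) ∧ Odd ((S ∩ B₁).card) ∧ Even ((S ∩ A₂).card) ∧
        Even ((S ∩ B₂).card)) ∨
      (Even ((S ∩ A₁).card) ∧ Even ((S ∩ B₁).card) ∧ Odd ((S ∩ A₂).card) ∧
        Odd ((S ∩ B₂).card)) then -1
  else 0


lemma neg_one_pow_congr_mod2 {a b : ℕ} (h : a % 2 = b % 2) : (-1:ℝ)^a = (-1:ℝ)^b := by
  rcases Nat.even_or_odd a with ha | ha
  · have hb : Even b := by rw [Nat.even_iff] at *; omega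
    rw [ha.neg_one_pow, hb.neg_one_pow]
  · have hb : Odd b := by rw [Nat.odd_iff] at *; omega
    rw [ha.neg_one_pow, hb.neg_one_pow]

lemma prod_ite_chi {k : ℕ} (t U : Finset (Fin k)) :
    (∏ i ∈ t, (if i ∈ U then (-1:ℝ) else 1)) = (-1)^((t ∩ U).card) := by
  rw [← Finset.prod_filter_mul_prod_filter_not t (fun i => i ∈ U)]
  have h1 : ∏ i ∈ t.filter (fun i => i ∈ U), (if i ∈ U then (-1:ℝ) else 1)
      = (-1)^((t ∩ U).card) := by
    rw [show t.filter (fun i => i ∈ U) = t ∩ U by ext x; simp [Finset.mem_filter]]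
    rw [Finset.prod_congr rfl (fun x hx => if_pos (Finset.mem_inter.mp hx).2),
      Finset.prod_const]
  have h2 : ∏ i ∈ t.filter (fun i => ¬ i ∈ U), (if i ∈ U then (-1:ℝ) else 1) = 1 := by
    apply Finset.prod_eq_one; intro x hx
    simp [Finset.mem_filter.mp hx |>.2]
  rw [h1, h2, mul_one]

lemma sum_powerset_chi {k : ℕ} (s U : Finset (Fin k)) :
    (∑ S ∈ s.powerset, (-1:ℝ)^((S ∩ U).card)) = if U ∩ s = ∅ then 2^s.card else 0 := by
  have := Finset.prod_add (fun i : Fin k => if i ∈ U then (-1:ℝ) else 1) (fun _ => 1) s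
  simp only [Finset.prod_const_one, mul_one] at this
  have hrw : ∀ t ∈ s.powerset, (∏ i ∈ t, (if i ∈ U then (-1:ℝ) else 1))
      = (-1:ℝ)^((t ∩ U).card) := fun t _ => prod_ite_chi t U
  rw [Finset.sum_congr rfl hrw] at this
  rw [← this]
  by_cases h : U ∩ s = ∅
  · rw [if_pos h]
    have : ∀ i ∈ s, ((if i ∈ U then (-1:ℝ) else 1) + 1) = 2 := by
      intro i hi
      have : i ∉ U := fun hiU => by
        have : i ∈ U ∩ s := Finset.mem_inter.mpr ⟨hiU, hi⟩
        simp [h] at this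
      simp [this]; norm_num
    rw [Finset.prod_congr rfl this, Finset.prod_const]
  · rw [if_neg h]
    obtain ⟨i, hi⟩ := Finset.nonempty_iff_ne_empty.mpr h
    have hiU := (Finset.mem_inter.mp hi).1
    have his := (Finset.mem_inter.mp hi).2
    exact Finset.prod_eq_zero his (by simp [hiU])

lemma sum_univ_chi {k : ℕ} (U : Finset (Fin k)) :
    (∑ S : Finset (Fin k), (-1:ℝ)^((S ∩ U).card)) = if U = ∅ then 2^k else 0 := by
  have := sum_powerset_chi (Finset.univ : Finset (Fin k)) U
  rw [Finset.powerset_univ] at this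
  simpa using this

lemma card_inter_union_chi {k : ℕ} {P : Finset (Fin k)} (U : Finset (Fin k))
    {S : Finset (Fin k)} (hPS : P ⊆ S) :
    (S ∩ U).card = (P ∩ U).card + ((S \ P) ∩ U).card := by
  rw [← Finset.card_union_of_disjoint, ← Finset.union_inter_distrib_right,
    Finset.union_sdiff_of_subset hPS]
  exact Finset.disjoint_sdiff.mono (Finset.inter_subset_left) (Finset.inter_subset_left)

lemma sum_superset_chi {k : ℕ} (P U : Finset (Fin k)) :
    (∑ S ∈ Finset.univ.filter (fun S => P ⊆ S), (-1:ℝ)^((S ∩ U).card))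
      = if U ⊆ P then (-1)^(U.card) * 2^(Pᶜ.card) else 0 := by
  have hbij : ∑ S ∈ Finset.univ.filter (fun S => P ⊆ S), (-1:ℝ)^((S ∩ U).card)
      = ∑ S' ∈ Pᶜ.powerset, (-1:ℝ)^(((S' ∪ P) ∩ U).card) := by
    apply Finset.sum_nbij' (fun S => S \ P) (fun S' => S' ∪ P)
    · intro S hS
      simp only [Finset.mem_powerset]
      intro x hx
      simp only [Finset.mem_sdiff] at hx
      simp [Finset.mem_compl, hx.2]
    · intro S' hS'
      simp only [Finset.mem_filter, Finset.mem_univ, true_and]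
      exact Finset.subset_union_right
    · intro S hS
      simp only [Finset.mem_filter, Finset.mem_univ, true_and] at hS
      rw [Finset.sdiff_union_of_subset hS]
    · intro S' hS'
      simp only [Finset.mem_powerset] at hS'
      rw [Finset.union_sdiff_right]
      apply Finset.sdiff_eq_self_of_disjoint
      rw [Finset.disjoint_left]
      intro x hx hxP
      have := hS' hx
      simp only [Finset.mem_compl] at this
      exact this hxP
    · intro S hS
      simp only [Finset.mem_filter, Finset.mem_univ, true_and] at hS
      rw [Finset.sdiff_union_of_subset hS]
  rw [hbij]
  have hrw : ∀ S' ∈ Pᶜ.powerset, (-1:ℝ)^(((S' ∪ P) ∩ U).card)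
      = (-1:ℝ)^((P ∩ U).card) * (-1:ℝ)^((S' ∩ U).card) := by
    intro S' hS'
    simp only [Finset.mem_powerset] at hS'
    have hd : Disjoint P S' := by
      rw [Finset.disjoint_left]; intro x hxP hxS'
      have := hS' hxS'
      simp only [Finset.mem_compl] at this; exact this hxP
    have := card_inter_union_chi U (Finset.subset_union_right : P ⊆ S' ∪ P)
    rw [Finset.union_sdiff_right, Finset.sdiff_eq_self_of_disjoint hd.symm] at this
    rw [this, pow_add]
  rw [Finset.sum_congr rfl hrw, ← Finset.mul_sum, sum_powerset_chi]
  by_cases h : U ⊆ P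
  · rw [if_pos h]
    have h1 : U ∩ Pᶜ = ∅ := by
      rw [Finset.eq_empty_iff_forall_notMem]
      intro x hx
      rcases Finset.mem_inter.mp hx with ⟨h1, h2⟩
      exact (Finset.mem_compl.mp h2) (h h1)
    rw [if_pos h1, Finset.inter_eq_right.mpr h]
  · rw [if_neg h]
    have h1 : ¬ (U ∩ Pᶜ = ∅) := by
      intro hc
      apply h
      intro x hx
      by_contra hxP
      have : x ∈ U ∩ Pᶜ := Finset.mem_inter.mpr ⟨hx, Finset.mem_compl.mpr hxP⟩
      simp [hc] at this
    rw [if_neg h1, mul_zero]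
lemma card_blockM (m n : ℕ) :
    (Finset.univ.filter (fun i : Fin (m+n) => i.val < m)).card = m := by
  rw [show Finset.univ.filter (fun i : Fin (m+n) => i.val < m)
      = Finset.image (Fin.castAdd n) Finset.univ from ?_]
  · rw [Finset.card_image_of_injective _ (Fin.castAdd_injective m n),
      Finset.card_univ, Fintype.card_fin]
  · ext x
    simp only [Finset.mem_filter, Finset.mem_univ, true_and, Finset.mem_image]
    constructor
    · intro hx; exact ⟨⟨x.val, hx⟩, by ext; simp⟩
    · rintro ⟨y, _, rfl⟩; exact y.isLt

lemma F_val (m n : ℕ) (hm : 1 ≤ m) (hn : 1 ≤ n) (U : Finset (Fin (m+n)))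
    (hU : U ≠ ∅) :
    (∑ S : DIdx m n, (-1:ℝ)^((S.val ∩ U).card))
      = -(if ∀ i ∈ U, i.val < m then (-1:ℝ)^U.card * 2^n else 0)
        - (if ∀ i ∈ U, m ≤ i.val then (-1:ℝ)^U.card * 2^m else 0)
        + (-1)^U.card - 1 := by
  classical
  set M : Finset (Fin (m+n)) := Finset.univ.filter (fun i => i.val < m) with hM
  set f : Finset (Fin (m+n)) → ℝ := fun S => (-1:ℝ)^((S ∩ U).card) with hf
  have hMc : Mᶜ = Finset.univ.filter (fun i : Fin (m+n) => m ≤ i.val) := by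
    ext x; simp [hM, Finset.mem_compl, Nat.not_lt]
  have hcardM : M.card = m := card_blockM m n
  have hcardMc : Mᶜ.card = n := by
    rw [Finset.card_compl, hcardM, Fintype.card_fin]; omega
  -- step 1: subtype sum to filter sum
  have h1 : (∑ S : DIdx m n, f S.val)
      = ∑ S ∈ Finset.univ.filter (DFace m n), f S := by
    rw [Finset.sum_subtype (p := DFace m n) (Finset.univ.filter (DFace m n)) (by simp) f]
  -- step 2: characterize non-faces
  have hchar : ∀ S : Finset (Fin (m+n)),
      (¬ DFace m n S) ↔ (S = ∅ ∨ (M ⊆ S ∨ Mᶜ ⊆ S)) := by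
    intro S
    unfold DFace
    simp only [not_and_or, not_exists, not_and, not_not,
      Finset.not_nonempty_iff_eq_empty]
    constructor
    · intro h
      rcases h with h | h | h
      · exact Or.inl h
      · refine Or.inr (Or.inl ?_)
        intro x hx
        simp only [hM, Finset.mem_filter, Finset.mem_univ, true_and] at hx
        exact (h x).resolve_left (not_not_intro hx)
      · refine Or.inr (Or.inr ?_)
        intro x hx
        rw [hMc] at hx
        simp only [Finset.mem_filter, Finset.mem_univ, true_and] at hx
        exact (h x).resolve_left (not_not_intro hx)
    · intro h
      rcases h with h | h | h
      · exact Or.inl (by simp [h])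
      · refine Or.inr (Or.inl (fun x => ?_))
        by_cases hx : x.val < m
        · exact Or.inr (h (by simp [hM, hx]))
        · exact Or.inl hx
      · refine Or.inr (Or.inr (fun x => ?_))
        by_cases hx : m ≤ x.val
        · exact Or.inr (h (by rw [hMc]; simp [hx]))
        · exact Or.inl hx
  -- step 3: main computation
  have h2 : (∑ S ∈ Finset.univ.filter (DFace m n), f S)
      + (∑ S ∈ Finset.univ.filter (fun S => ¬ DFace m n S), f S)
      = ∑ S : Finset (Fin (m+n)), f S :=
    Finset.sum_filter_add_sum_filter_not _ _ _
  have hAll : (∑ S : Finset (Fin (m+n)), f S) = 0 := by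
    rw [hf]; rw [sum_univ_chi U, if_neg hU]
  -- non-face sum
  have hfiltereq : Finset.univ.filter (fun S => ¬ DFace m n S)
      = Finset.univ.filter (fun S => S = ∅ ∨ (M ⊆ S ∨ Mᶜ ⊆ S)) := by
    apply Finset.filter_congr
    intro S _
    exact (hchar S)
  have hMne : M.Nonempty := by
    rw [← Finset.card_pos, hcardM]; omega
  have hMcne : Mᶜ.Nonempty := by
    rw [← Finset.card_pos, hcardMc]; omega
  have hsplit1 : (∑ S ∈ Finset.univ.filter
        (fun S : Finset (Fin (m+n)) => S = ∅ ∨ (M ⊆ S ∨ Mᶜ ⊆ S)), f S)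
      = f ∅ + ∑ S ∈ Finset.univ.filter
        (fun S : Finset (Fin (m+n)) => M ⊆ S ∨ Mᶜ ⊆ S), f S := by
    rw [Finset.filter_or, Finset.sum_union]
    · congr 1
      rw [show Finset.univ.filter (fun S : Finset (Fin (m+n)) => S = ∅) = {∅} from ?_]
      · rw [Finset.sum_singleton]
      · ext S; simp
    · rw [Finset.disjoint_left]
      intro S hS hS'
      simp only [Finset.mem_filter, Finset.mem_univ, true_and] at hS hS'
      subst hS
      rcases hS' with h | h
      · exact absurd (Finset.subset_empty.mp h) (Finset.nonempty_iff_ne_empty.mp hMne)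
      · exact absurd (Finset.subset_empty.mp h) (Finset.nonempty_iff_ne_empty.mp hMcne)
  have hinter : Finset.univ.filter (fun S : Finset (Fin (m+n)) => M ⊆ S)
      ∩ Finset.univ.filter (fun S : Finset (Fin (m+n)) => Mᶜ ⊆ S)
      = {Finset.univ} := by
    ext S
    simp only [Finset.mem_inter, Finset.mem_filter, Finset.mem_univ, true_and,
      Finset.mem_singleton]
    constructor
    · rintro ⟨h1, h2⟩
      apply Finset.eq_univ_of_forall
      intro x
      by_cases hx : x ∈ M
      · exact h1 hx
      · exact h2 (Finset.mem_compl.mpr hx)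
    · rintro rfl
      exact ⟨Finset.subset_univ _, Finset.subset_univ _⟩
  have hsplit2 : (∑ S ∈ Finset.univ.filter
        (fun S : Finset (Fin (m+n)) => M ⊆ S ∨ Mᶜ ⊆ S), f S)
      = (∑ S ∈ Finset.univ.filter (fun S : Finset (Fin (m+n)) => M ⊆ S), f S)
        + (∑ S ∈ Finset.univ.filter (fun S : Finset (Fin (m+n)) => Mᶜ ⊆ S), f S)
        - f Finset.univ := by
    rw [Finset.filter_or]
    have := Finset.sum_union_inter
      (s₁ := Finset.univ.filter (fun S : Finset (Fin (m+n)) => M ⊆ S))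
      (s₂ := Finset.univ.filter (fun S : Finset (Fin (m+n)) => Mᶜ ⊆ S)) (f := f)
    rw [hinter, Finset.sum_singleton] at this
    linarith
  have hsupM : (∑ S ∈ Finset.univ.filter (fun S : Finset (Fin (m+n)) => M ⊆ S), f S)
      = if ∀ i ∈ U, i.val < m then (-1:ℝ)^U.card * 2^n else 0 := by
    rw [hf, sum_superset_chi M U, hcardMc]
    congr 1
    simp only [eq_iff_iff]
    constructor
    · intro h i hi
      have := h hi
      simp only [hM, Finset.mem_filter, Finset.mem_univ, true_and] at this
      exact this
    · intro h i hi
      simp only [hM, Finset.mem_filter, Finset.mem_univ, true_and]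
      exact h i hi
  have hsupMc : (∑ S ∈ Finset.univ.filter (fun S : Finset (Fin (m+n)) => Mᶜ ⊆ S), f S)
      = if ∀ i ∈ U, m ≤ i.val then (-1:ℝ)^U.card * 2^m else 0 := by
    rw [hf, sum_superset_chi Mᶜ U, compl_compl, hcardM]
    congr 1
    simp only [eq_iff_iff]
    constructor
    · intro h i hi
      have := h hi
      rw [hMc] at this
      simp only [Finset.mem_filter, Finset.mem_univ, true_and] at this
      exact this
    · intro h i hi
      rw [hMc]
      simp only [Finset.mem_filter, Finset.mem_univ, true_and]
      exact h i hi
  have hfempty : f ∅ = 1 := by simp [hf]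
  have hfuniv : f Finset.univ = (-1:ℝ)^U.card := by
    simp [hf, Finset.univ_inter]
  rw [h1]
  rw [hfiltereq, hsplit1, hsplit2, hsupM, hsupMc, hfempty, hfuniv, hAll] at h2
  linarith
lemma neg_one_pow_mod (c : ℕ) : (-1:ℝ)^c = (-1:ℝ)^(c % 2) :=
  neg_one_pow_congr_mod2 (by omega)

lemma key4 (c1 c2 c3 c4 : ℕ) :
    (if (Odd c1 ∧ Even c2 ∧ Even c3 ∧ Odd c4) ∨ (Even c1 ∧ Odd c2 ∧ Odd c3 ∧ Even c4)
      then (1:ℝ)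
     else if (Odd c1 ∧ Odd c2 ∧ Even c3 ∧ Even c4) ∨ (Even c1 ∧ Even c2 ∧ Odd c3 ∧ Odd c4)
      then -1 else 0)
    = (-(-1:ℝ)^c1 * (-1)^c2 + (-1)^c3 * (-1)^c2 + (-1)^c1 * (-1)^c4
        - (-1)^c3 * (-1)^c4) / 4 := by
  rcases Nat.mod_two_eq_zero_or_one c1 with h1 | h1 <;>
  rcases Nat.mod_two_eq_zero_or_one c2 with h2 | h2 <;>
  rcases Nat.mod_two_eq_zero_or_one c3 with h3 | h3 <;>
  rcases Nat.mod_two_eq_zero_or_one c4 with h4 | h4 <;>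
  (rw [neg_one_pow_mod c1, neg_one_pow_mod c2, neg_one_pow_mod c3, neg_one_pow_mod c4,
      h1, h2, h3, h4]
   simp [Nat.odd_iff, Nat.even_iff, h1, h2, h3, h4]
   try norm_num)

lemma card_symmDiff_mod {k : ℕ} (u t : Finset (Fin k)) :
    (symmDiff u t).card % 2 = (u.card + t.card) % 2 := by
  have h1 : (symmDiff u t) = (u \ t) ∪ (t \ u) := by
    ext x; simp [Finset.mem_symmDiff, Finset.mem_union, Finset.mem_sdiff]
  have hd : Disjoint (u \ t) (t \ u) := by
    rw [Finset.disjoint_left]; intro x hx hx'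
    exact (Finset.mem_sdiff.mp hx).2 (Finset.mem_sdiff.mp hx').1
  have h2 := Finset.card_sdiff_add_card_inter u t
  have h3 := Finset.card_sdiff_add_card_inter t u
  rw [Finset.inter_comm t u] at h3
  rw [h1, Finset.card_union_of_disjoint hd]
  omega

lemma inter_symmDiff {k : ℕ} (S u t : Finset (Fin k)) :
    S ∩ (symmDiff u t) = symmDiff (S ∩ u) (S ∩ t) := by
  ext x; simp [Finset.mem_symmDiff]; tauto

lemma chi_mul {k : ℕ} (S u t : Finset (Fin k)) :
    (-1:ℝ)^((S ∩ u).card) * (-1)^((S ∩ t).card) = (-1)^((S ∩ (symmDiff u t)).card) := by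
  rw [← pow_add]
  apply neg_one_pow_congr_mod2
  rw [inter_symmDiff]
  exact (card_symmDiff_mod _ _).symm ▸ rfl

lemma symmdiff_low {m n : ℕ} (A B T : Finset (Fin (m+n)))
    (hA : ∀ i ∈ A, i.val < m) (hB : ∀ j ∈ B, m ≤ j.val) :
    (∀ i ∈ symmDiff (A ∪ B) T, i.val < m)
      ↔ (∀ x : Fin (m+n), m ≤ x.val → (x ∈ B ↔ x ∈ T)) := by
  constructor
  · intro h x hx
    have hxA : x ∉ A := fun hxa => absurd (hA x hxa) (by omega)
    constructor
    · intro hxB; by_contra hxT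
      have hmem : x ∈ symmDiff (A ∪ B) T := by
        rw [Finset.mem_symmDiff]
        exact Or.inl ⟨Finset.mem_union_right _ hxB, hxT⟩
      exact absurd (h x hmem) (by omega)
    · intro hxT; by_contra hxB
      have hmem : x ∈ symmDiff (A ∪ B) T := by
        rw [Finset.mem_symmDiff]
        exact Or.inr ⟨hxT, by simp [hxA, hxB]⟩
      exact absurd (h x hmem) (by omega)
  · intro h i hi
    by_contra hge
    push_neg at hge
    rw [Finset.mem_symmDiff] at hi
    have hiA : i ∉ A := fun hia => absurd (hA i hia) (by omega)
    have hiff := h i hge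
    rcases hi with ⟨hiU, hiT⟩ | ⟨hiT, hiU⟩
    · rcases Finset.mem_union.mp hiU with h' | h'
      · exact hiA h'
      · exact hiT (hiff.mp h')
    · exact hiU (Finset.mem_union_right _ (hiff.mpr hiT))

lemma symmdiff_high {m n : ℕ} (A B T : Finset (Fin (m+n)))
    (hA : ∀ i ∈ A, i.val < m) (hB : ∀ j ∈ B, m ≤ j.val) :
    (∀ i ∈ symmDiff (A ∪ B) T, m ≤ i.val)
      ↔ (∀ x : Fin (m+n), x.val < m → (x ∈ A ↔ x ∈ T)) := by
  constructor
  · intro h x hx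
    have hxB : x ∉ B := fun hxb => absurd (hB x hxb) (by omega)
    constructor
    · intro hxA; by_contra hxT
      have hmem : x ∈ symmDiff (A ∪ B) T := by
        rw [Finset.mem_symmDiff]
        exact Or.inl ⟨Finset.mem_union_left _ hxA, hxT⟩
      exact absurd (h x hmem) (by omega)
    · intro hxT; by_contra hxA
      have hmem : x ∈ symmDiff (A ∪ B) T := by
        rw [Finset.mem_symmDiff]
        exact Or.inr ⟨hxT, by simp [hxA, hxB]⟩
      exact absurd (h x hmem) (by omega)
  · intro h i hi
    by_contra hge
    push_neg at hge
    rw [Finset.mem_symmDiff] at hi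
    have hiB : i ∉ B := fun hib => absurd (hB i hib) (by omega)
    have hiff := h i hge
    rcases hi with ⟨hiU, hiT⟩ | ⟨hiT, hiU⟩
    · rcases Finset.mem_union.mp hiU with h' | h'
      · exact hiT (hiff.mp h')
      · exact hiB h'
    · exact hiU (Finset.mem_union_left _ (hiff.mpr hiT))

lemma fourParity_eq (m n : ℕ) (A₁ A₂ B₁ B₂ : Finset (Fin (m+n)))
    (hA₁ : ∀ i ∈ A₁, i.val < m) (hA₂ : ∀ i ∈ A₂, i.val < m)
    (hB₁ : ∀ j ∈ B₁, m ≤ j.val) (hB₂ : ∀ j ∈ B₂, m ≤ j.val)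
    (S : Finset (Fin (m+n))) :
    fourParity m n A₁ A₂ B₁ B₂ S
      = (-(-1:ℝ)^((S ∩ (A₁ ∪ B₁)).card) + (-1)^((S ∩ (A₂ ∪ B₁)).card)
          + (-1)^((S ∩ (A₁ ∪ B₂)).card) - (-1)^((S ∩ (A₂ ∪ B₂)).card)) / 4 := by
  have hsplit : ∀ (A B : Finset (Fin (m+n))), (∀ i ∈ A, i.val < m) →
      (∀ j ∈ B, m ≤ j.val) → (S ∩ (A ∪ B)).card = (S ∩ A).card + (S ∩ B).card := by
    intro A B hA hB
    rw [Finset.inter_union_distrib_left, Finset.card_union_of_disjoint]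
    rw [Finset.disjoint_left]
    intro x hx hx'
    have h1 := hA x (Finset.mem_inter.mp hx).2
    have h2 := hB x (Finset.mem_inter.mp hx').2
    omega
  rw [hsplit A₁ B₁ hA₁ hB₁, hsplit A₂ B₁ hA₂ hB₁, hsplit A₁ B₂ hA₁ hB₂,
    hsplit A₂ B₂ hA₂ hB₂]
  simp only [pow_add]
  unfold fourParity
  rw [key4 ((S ∩ A₁).card) ((S ∩ B₁).card) ((S ∩ A₂).card) ((S ∩ B₂).card)]
  ring

lemma dvecD_eq (m n : ℕ) (T : Finset (Fin (m+n))) (S : DIdx m n) :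
    dvecD m n T S = (1 - (-1:ℝ)^((S.val ∩ T).card)) / 2 := by
  rcases Nat.even_or_odd ((S.val ∩ T).card) with h | h
  · rw [show dvecD m n T S = 0 from if_neg (Nat.not_odd_iff_even.mpr h), h.neg_one_pow]
    norm_num
  · rw [show dvecD m n T S = 1 from if_pos h, h.neg_one_pow]
    norm_num
/-- for `T ∉ {A₁ ∪ B₁, A₁ ∪ B₂, A₂ ∪ B₁, A₂ ∪ B₂}`,
`Σ_{S ∈ D̄_{m,n}} a_S d^T_S = 0`; equivalently, among the `S ∈ D̄_{m,n}` with
`#(S ∩ T)` odd, as many have `a_S = 1` as have `a_S = −1`. -/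
theorem stmt_15 (m n : ℕ) (hm : 2 ≤ m) (hn : 2 ≤ n)
    (A₁ A₂ B₁ B₂ : Finset (Fin (m + n)))
    (hA₁ : ∀ i ∈ A₁, i.val < m) (hA₂ : ∀ i ∈ A₂, i.val < m)
    (hB₁ : ∀ j ∈ B₁, m ≤ j.val) (hB₂ : ∀ j ∈ B₂, m ≤ j.val)
    (hA₁ne : A₁.Nonempty) (hA₂ne : A₂.Nonempty)
    (hB₁ne : B₁.Nonempty) (hB₂ne : B₂.Nonempty)
    (hAne : A₁ ≠ A₂) (hBne : B₁ ≠ B₂)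
    (hpar₁ : A₁.card % 2 = A₂.card % 2)
    (hpar₂ : A₂.card % 2 = B₁.card % 2)
    (hpar₃ : B₁.card % 2 = B₂.card % 2)
    (T : Finset (Fin (m + n)))
    (hT : T ≠ A₁ ∪ B₁ ∧ T ≠ A₁ ∪ B₂ ∧ T ≠ A₂ ∪ B₁ ∧ T ≠ A₂ ∪ B₂) :
    (∑ S : DIdx m n, fourParity m n A₁ A₂ B₁ B₂ S.val * dvecD m n T S = 0) ∧
    (Finset.univ.filter (fun S : DIdx m n =>
        Odd ((S.val ∩ T).card) ∧ fourParity m n A₁ A₂ B₁ B₂ S.val = 1)).card =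
      (Finset.univ.filter (fun S : DIdx m n =>
        Odd ((S.val ∩ T).card) ∧ fourParity m n A₁ A₂ B₁ B₂ S.val = -1)).card := by
  classical
  obtain ⟨hTa, hTb, hTc, hTd⟩ := hT
  -- disjoint-union card helper
  have hcard : ∀ (A B : Finset (Fin (m+n))), (∀ i ∈ A, i.val < m) →
      (∀ j ∈ B, m ≤ j.val) → (A ∪ B).card = A.card + B.card := by
    intro A B hA hB
    rw [Finset.card_union_of_disjoint]
    rw [Finset.disjoint_left]
    intro x hx hx'
    have h1 := hA x hx
    have h2 := hB x hx'
    omega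
  -- per-S identity
  have hS : ∀ S : DIdx m n, fourParity m n A₁ A₂ B₁ B₂ S.val * dvecD m n T S
      = (-(-1:ℝ)^((S.val ∩ (A₁ ∪ B₁)).card) + (-1:ℝ)^((S.val ∩ (A₂ ∪ B₁)).card)
          + (-1:ℝ)^((S.val ∩ (A₁ ∪ B₂)).card) - (-1:ℝ)^((S.val ∩ (A₂ ∪ B₂)).card)
          + (-1:ℝ)^((S.val ∩ (symmDiff (A₁ ∪ B₁) T)).card)
          - (-1:ℝ)^((S.val ∩ (symmDiff (A₂ ∪ B₁) T)).card)
          - (-1:ℝ)^((S.val ∩ (symmDiff (A₁ ∪ B₂) T)).card)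
          + (-1:ℝ)^((S.val ∩ (symmDiff (A₂ ∪ B₂) T)).card)) / 8 := by
    intro S
    rw [fourParity_eq m n A₁ A₂ B₁ B₂ hA₁ hA₂ hB₁ hB₂ S.val, dvecD_eq]
    have e11 := chi_mul S.val (A₁ ∪ B₁) T
    have e21 := chi_mul S.val (A₂ ∪ B₁) T
    have e12 := chi_mul S.val (A₁ ∪ B₂) T
    have e22 := chi_mul S.val (A₂ ∪ B₂) T
    linear_combination (e11 - e21 - e12 + e22) / 8
  have hsum : (∑ S : DIdx m n, fourParity m n A₁ A₂ B₁ B₂ S.val * dvecD m n T S)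
      = (-(∑ S : DIdx m n, (-1:ℝ)^((S.val ∩ (A₁ ∪ B₁)).card))
          + (∑ S : DIdx m n, (-1:ℝ)^((S.val ∩ (A₂ ∪ B₁)).card))
          + (∑ S : DIdx m n, (-1:ℝ)^((S.val ∩ (A₁ ∪ B₂)).card))
          - (∑ S : DIdx m n, (-1:ℝ)^((S.val ∩ (A₂ ∪ B₂)).card))
          + (∑ S : DIdx m n, (-1:ℝ)^((S.val ∩ (symmDiff (A₁ ∪ B₁) T)).card))
          - (∑ S : DIdx m n, (-1:ℝ)^((S.val ∩ (symmDiff (A₂ ∪ B₁) T)).card))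
          - (∑ S : DIdx m n, (-1:ℝ)^((S.val ∩ (symmDiff (A₁ ∪ B₂) T)).card))
          + (∑ S : DIdx m n, (-1:ℝ)^((S.val ∩ (symmDiff (A₂ ∪ B₂) T)).card))) / 8 := by
    rw [Finset.sum_congr rfl (fun S _ => hS S), ← Finset.sum_div]
    congr 1
    simp only [Finset.sum_add_distrib, Finset.sum_sub_distrib, Finset.sum_neg_distrib]
  -- value of F on the unions
  have hFU : ∀ (A B : Finset (Fin (m+n))), (∀ i ∈ A, i.val < m) →
      (∀ j ∈ B, m ≤ j.val) → A.Nonempty → B.Nonempty →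
      (A.card + B.card) % 2 = 0 →
      (∑ S : DIdx m n, (-1:ℝ)^((S.val ∩ (A ∪ B)).card)) = 0 := by
    intro A B hA hB hAne hBne hpar
    have hne : (A ∪ B) ≠ ∅ := by
      intro hc
      obtain ⟨a, ha⟩ := hAne
      have : a ∈ A ∪ B := Finset.mem_union_left _ ha
      simp [hc] at this
    rw [F_val m n (by omega) (by omega) _ hne]
    obtain ⟨a, ha⟩ := hAne
    obtain ⟨b, hb⟩ := hBne
    have hno1 : ¬ (∀ i ∈ A ∪ B, i.val < m) := by
      intro hcon
      have h1 := hcon b (Finset.mem_union_right _ hb)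
      have h2 := hB b hb
      omega
    have hno2 : ¬ (∀ i ∈ A ∪ B, m ≤ i.val) := by
      intro hcon
      have h1 := hcon a (Finset.mem_union_left _ ha)
      have h2 := hA a ha
      omega
    rw [if_neg hno1, if_neg hno2]
    have hmod : (A ∪ B).card % 2 = 0 := by rw [hcard A B hA hB]; exact hpar
    rw [neg_one_pow_mod, hmod]
    norm_num
  -- value of F on the symmetric differences
  have hFV : ∀ (A B : Finset (Fin (m+n))), (∀ i ∈ A, i.val < m) →
      (∀ j ∈ B, m ≤ j.val) → (A.card + B.card) % 2 = 0 → T ≠ A ∪ B →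
      (∑ S : DIdx m n, (-1:ℝ)^((S.val ∩ (symmDiff (A ∪ B) T)).card))
        = -(if (∀ x : Fin (m+n), m ≤ x.val → (x ∈ B ↔ x ∈ T))
              then (-1:ℝ)^T.card * 2^n else 0)
          - (if (∀ x : Fin (m+n), x.val < m → (x ∈ A ↔ x ∈ T))
              then (-1:ℝ)^T.card * 2^m else 0)
          + (-1:ℝ)^T.card - 1 := by
    intro A B hA hB hpar hne
    have hVne : symmDiff (A ∪ B) T ≠ ∅ := by
      intro hc
      have : (A ∪ B) = T := by rwa [← Finset.bot_eq_empty, symmDiff_eq_bot] at hc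
      exact hne this.symm
    rw [F_val m n (by omega) (by omega) _ hVne]
    have hparV : (symmDiff (A ∪ B) T).card % 2 = T.card % 2 := by
      rw [card_symmDiff_mod, hcard A B hA hB]
      omega
    rw [neg_one_pow_congr_mod2 hparV]
    rw [if_congr (symmdiff_low A B T hA hB) rfl rfl,
      if_congr (symmdiff_high A B T hA hB) rfl rfl]
  -- main vanishing
  have hpar11 : (A₁.card + B₁.card) % 2 = 0 := by omega
  have hpar21 : (A₂.card + B₁.card) % 2 = 0 := by omega
  have hpar12 : (A₁.card + B₂.card) % 2 = 0 := by omega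
  have hpar22 : (A₂.card + B₂.card) % 2 = 0 := by omega
  have hmain : (∑ S : DIdx m n, fourParity m n A₁ A₂ B₁ B₂ S.val * dvecD m n T S) = 0 := by
    rw [hsum,
      hFU A₁ B₁ hA₁ hB₁ hA₁ne hB₁ne hpar11,
      hFU A₂ B₁ hA₂ hB₁ hA₂ne hB₁ne hpar21,
      hFU A₁ B₂ hA₁ hB₂ hA₁ne hB₂ne hpar12,
      hFU A₂ B₂ hA₂ hB₂ hA₂ne hB₂ne hpar22,
      hFV A₁ B₁ hA₁ hB₁ hpar11 hTa,
      hFV A₂ B₁ hA₂ hB₁ hpar21 hTc,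
      hFV A₁ B₂ hA₁ hB₂ hpar12 hTb,
      hFV A₂ B₂ hA₂ hB₂ hpar22 hTd]
    ring
  refine ⟨hmain, ?_⟩
  -- counting identity
  have hterm : ∀ S : DIdx m n, fourParity m n A₁ A₂ B₁ B₂ S.val * dvecD m n T S
      = (if (Odd ((S.val ∩ T).card) ∧ fourParity m n A₁ A₂ B₁ B₂ S.val = 1)
          then (1:ℝ) else 0)
        - (if (Odd ((S.val ∩ T).card) ∧ fourParity m n A₁ A₂ B₁ B₂ S.val = -1)
          then (1:ℝ) else 0) := by
    intro S
    have hval : fourParity m n A₁ A₂ B₁ B₂ S.val = 1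
        ∨ fourParity m n A₁ A₂ B₁ B₂ S.val = -1
        ∨ fourParity m n A₁ A₂ B₁ B₂ S.val = 0 := by
      unfold fourParity
      split_ifs <;> simp
    by_cases ho : Odd ((S.val ∩ T).card)
    · rw [show dvecD m n T S = 1 from if_pos ho, mul_one]
      rcases hval with h | h | h <;> rw [h] <;> norm_num [ho]
    · rw [show dvecD m n T S = 0 from if_neg ho, mul_zero]
      simp [ho]
  have hcount : (∑ S : DIdx m n, fourParity m n A₁ A₂ B₁ B₂ S.val * dvecD m n T S)
      = ((Finset.univ.filter (fun S : DIdx m n =>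
            Odd ((S.val ∩ T).card) ∧ fourParity m n A₁ A₂ B₁ B₂ S.val = 1)).card : ℝ)
        - ((Finset.univ.filter (fun S : DIdx m n =>
            Odd ((S.val ∩ T).card) ∧ fourParity m n A₁ A₂ B₁ B₂ S.val = -1)).card : ℝ) := by
    rw [Finset.sum_congr rfl (fun S _ => hterm S), Finset.sum_sub_distrib,
      Finset.sum_boole, Finset.sum_boole]
  rw [hcount] at hmain
  have := sub_eq_zero.mp hmain
  exact_mod_cast this
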